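/- If T is a finite tree, then for every dominating set S of T, |a(S)| ≤ 2Γ(T) − |S| (as integers). -/

import Mathlib

open scoped Classical

variable {V : Type*} [Fintype V] [DecidableEq V]

/-- `S` is a dominating set of `G`: every vertex is in `S` or adjacent to a vertex of `S`. -/
def IsDomSet (G : SimpleGraph V) (S : Finset V) : Prop :=
  ∀ v : V, v ∈ S ∨ ∃ u ∈ S, G.Adj u v

/-- `S` is a minimal dominating set: it is dominating and no proper subset is dominating. -/
def MinimalDomSet (G : SimpleGraph V) (S : Finset V) : Prop :=
  IsDomSet G S ∧ ∀ T : Finset V, T ⊂ S → ¬ IsDomSet G T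

/-- `d_i(G)`: the number of dominating sets of `G` of cardinality `i`. -/
noncomputable def domCount (G : SimpleGraph V) (i : ℕ) : ℕ :=
  (Finset.univ.filter fun S : Finset V => IsDomSet G S ∧ S.card = i).card

/-- `a(S)`: the set of critical vertices of a dominating set `S`. -/
noncomputable def aSet (G : SimpleGraph V) (S : Finset V) : Finset V :=
  S.filter fun v => ¬ IsDomSet G (S.erase v)

/-- `a(G,i)`: the sum of `|a(S)|` over all dominating sets `S` of cardinality `i`. -/
noncomputable def aTotal (G : SimpleGraph V) (i : ℕ) : ℕ :=
  ∑ S ∈ Finset.univ.filter (fun S : Finset V => IsDomSet G S ∧ S.card = i), (aSet G S).card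

/-- `γ(G)`: the minimum cardinality of a dominating set. -/
noncomputable def gamma (G : SimpleGraph V) : ℕ :=
  sInf {k | ∃ S : Finset V, IsDomSet G S ∧ S.card = k}

/-- `Γ(G)`: the maximum cardinality of a minimal dominating set. -/
noncomputable def bigGamma (G : SimpleGraph V) : ℕ :=
  sSup {k | ∃ S : Finset V, MinimalDomSet G S ∧ S.card = k}

/-- The closed neighbourhood `N[v]` as a finset. -/
noncomputable def closedNbhd (G : SimpleGraph V) (v : V) : Finset V :=
  Finset.univ.filter fun u => u = v ∨ G.Adj v u

/-- `N_1(S)`: vertices outside `S` with exactly one closed neighbour in `S`. -/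
noncomputable def N1Set (G : SimpleGraph V) (S : Finset V) : Finset V :=
  Finset.univ.filter fun v => v ∉ S ∧ (closedNbhd G v ∩ S).card = 1

/-- `N_2(S)`: vertices outside `S` with at least two closed neighbours in `S`. -/
noncomputable def N2Set (G : SimpleGraph V) (S : Finset V) : Finset V :=
  Finset.univ.filter fun v => v ∉ S ∧ 2 ≤ (closedNbhd G v ∩ S).card

/-- `a_1(S)`: critical vertices whose closed neighbourhood meets `N_1(S)`. -/
noncomputable def a1Set (G : SimpleGraph V) (S : Finset V) : Finset V :=
  (aSet G S).filter fun v => (closedNbhd G v ∩ N1Set G S).Nonempty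

/-- `a_2(S)`: critical vertices whose closed neighbourhood misses `N_1(S)`. -/
noncomputable def a2Set (G : SimpleGraph V) (S : Finset V) : Finset V :=
  (aSet G S).filter fun v => closedNbhd G v ∩ N1Set G S = ∅

/-- In the tree `G` rooted at `r`, `x` is a descendant of `y`:
`y` lies on the unique path from `x` to the root `r`. -/
def Descendant (G : SimpleGraph V) (r x y : V) : Prop :=
  G.dist x r = G.dist x y + G.dist y r

/-- `x` is a child of `y` in `G` rooted at `r`. -/
def IsChild (G : SimpleGraph V) (r x y : V) : Prop :=
  Descendant G r x y ∧ G.dist y x = 1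

/-- `p` is the parent of `x` in `G` rooted at `r`. -/
def IsParent (G : SimpleGraph V) (r p x : V) : Prop :=
  IsChild G r x p

/-- `x` is a grandchild of `y` in `G` rooted at `r`. -/
def IsGrandchild (G : SimpleGraph V) (r x y : V) : Prop :=
  Descendant G r x y ∧ G.dist y x = 2

open Finset

lemma le_bigGamma {G : SimpleGraph V} {D : Finset V} (hD : MinimalDomSet G D) :
    D.card ≤ bigGamma G := by
  refine le_csSup ⟨Fintype.card V, ?_⟩ ⟨D, hD, rfl⟩
  rintro k ⟨T, _, rfl⟩
  exact T.card_le_univ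

lemma exists_minimalDomSet_superset (G : SimpleGraph V) (I : Finset V)
    (hI : ∀ u ∈ I, ∀ v ∈ I, ¬ G.Adj u v) :
    ∃ J : Finset V, I ⊆ J ∧ MinimalDomSet G J := by
  classical
  set F : Finset (Finset V) :=
    univ.filter (fun J => I ⊆ J ∧ ∀ u ∈ J, ∀ v ∈ J, ¬ G.Adj u v) with hF
  have hne : F.Nonempty := ⟨I, by rw [hF, mem_filter]; exact ⟨mem_univ _, subset_rfl, hI⟩⟩
  obtain ⟨J, hJF, hJmax⟩ := F.exists_max_image Finset.card hne
  rw [hF, mem_filter] at hJF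
  obtain ⟨-, hIJ, hJind⟩ := hJF
  have hdom : IsDomSet G J := by
    intro v
    by_cases hv : v ∈ J
    · exact Or.inl hv
    by_contra hcon
    push_neg at hcon
    obtain ⟨-, hno⟩ := hcon
    have hins : insert v J ∈ F := by
      rw [hF, mem_filter]
      refine ⟨mem_univ _, hIJ.trans (subset_insert _ _), ?_⟩
      intro a ha b hb hadj
      rw [mem_insert] at ha hb
      rcases ha with rfl | ha
      · rcases hb with rfl | hb
        · exact G.irrefl hadj
        · exact hno b hb hadj.symm
      · rcases hb with rfl | hb
        · exact hno a ha hadj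
        · exact hJind a ha b hb hadj
    have := hJmax _ hins
    rw [card_insert_of_notMem hv] at this
    omega
  refine ⟨J, hIJ, hdom, ?_⟩
  intro T hTJ hTdom
  obtain ⟨v, hvJ, hvT⟩ := exists_of_ssubset hTJ
  rcases hTdom v with hv | ⟨u, huT, hadj⟩
  · exact hvT hv
  · exact hJind u (hTJ.subset huT) v hvJ hadj

lemma isTree_path_length {G : SimpleGraph V} (hT : G.IsTree) {u v : V}
    {p : G.Walk u v} (hp : p.IsPath) : p.length = G.dist u v := by
  obtain ⟨q, hq⟩ := (hT.isConnected u v).exists_walk_length_eq_dist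
  have huniq := hT.existsUnique_path u v
  have h1 : p = q.bypass := huniq.unique hp q.bypass_isPath
  refine le_antisymm ?_ (SimpleGraph.dist_le p)
  calc p.length = q.bypass.length := by rw [h1]
    _ ≤ q.length := q.length_bypass_le
    _ = G.dist u v := hq

lemma tree_adj_dist {G : SimpleGraph V} (hT : G.IsTree) (r : V) {u v : V} (h : G.Adj u v) :
    G.dist r v = G.dist r u + 1 ∨ G.dist r u = G.dist r v + 1 := by
  classical
  obtain ⟨p, hp⟩ := (hT.existsUnique_path r u).exists
  by_cases hv : v ∈ p.support
  · right
    have h1 : (p.takeUntil v hv).length = G.dist r v :=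
      isTree_path_length hT (hp.takeUntil hv)
    have h2 : (p.dropUntil v hv).length = G.dist v u :=
      isTree_path_length hT (hp.dropUntil hv)
    have h3 : (p.takeUntil v hv).length + (p.dropUntil v hv).length = p.length := by
      rw [← SimpleGraph.Walk.length_append, SimpleGraph.Walk.take_spec]
    have h4 : p.length = G.dist r u := isTree_path_length hT hp
    have h5 : G.dist v u = 1 := SimpleGraph.dist_eq_one_iff_adj.mpr h.symm
    omega
  · left
    have hpath : (p.concat h).IsPath := by
      have : (p.concat h).reverse.IsPath := by
        rw [SimpleGraph.Walk.reverse_concat]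
        exact (hp.reverse).cons (by simpa using hv)
      simpa [SimpleGraph.Walk.concat] using this.reverse
    have h1 : (p.concat h).length = G.dist r v := isTree_path_length hT hpath
    rw [SimpleGraph.Walk.length_concat] at h1
    have h2 : p.length = G.dist r u := isTree_path_length hT hp
    omega

theorem aSet_card_upper_bound_of_tree (G : SimpleGraph V) (hT : G.IsTree)
    (S : Finset V) (hS : IsDomSet G S) :
    ((aSet G S).card : ℤ) ≤ 2 * (bigGamma G : ℤ) - (S.card : ℤ) := by
  classical
  obtain ⟨r⟩ := hT.isConnected.nonempty
  set A := aSet G S with hA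
  have hAS : A ⊆ S := filter_subset _ _
  have hchoice : ∀ v ∈ A, ∃ w : V, (w = v ∨ G.Adj v w) ∧
      ∀ u ∈ S, (u = w ∨ G.Adj u w) → u = v := by
    intro v hv
    rw [hA, aSet, mem_filter] at hv
    obtain ⟨hvS, hnd⟩ := hv
    rw [IsDomSet] at hnd
    push_neg at hnd
    obtain ⟨w, hw1, hw2⟩ := hnd
    have key : ∀ u ∈ S, (u = w ∨ G.Adj u w) → u = v := by
      intro u huS hu
      by_contra hne
      have hue : u ∈ S.erase v := mem_erase.mpr ⟨hne, huS⟩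
      rcases hu with rfl | hadj
      · exact hw1 hue
      · exact hw2 u hue hadj
    refine ⟨w, ?_, key⟩
    rcases hS w with hwS | ⟨u, huS, hadj⟩
    · exact Or.inl (key w hwS (Or.inl rfl))
    · exact Or.inr ((key u huS (Or.inr hadj)) ▸ hadj)
  choose! pn hpn1 hpn2 using hchoice
  have hinj : ∀ v ∈ A, ∀ v' ∈ A, pn v = pn v' → v = v' := by
    intro v hv v' hv' he
    have h1 := hpn1 v hv
    rw [he] at h1
    exact hpn2 v' hv' v (hAS hv) (h1.imp Eq.symm id)
  set W := S ∪ A.image pn with hW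
  set Iso := W.filter (fun v => ∀ u ∈ W, ¬ G.Adj u v) with hIso
  set A0 := A.filter (fun v => pn v = v) with hA0
  set A1 := A.filter (fun v => ¬ pn v = v) with hA1
  have hA0Iso : A0 ⊆ Iso := by
    intro v hv
    rw [hA0, mem_filter] at hv
    obtain ⟨hvA, hpv⟩ := hv
    rw [hIso, mem_filter]
    refine ⟨mem_union_left _ (hAS hvA), ?_⟩
    intro u huW hadj
    rw [hW, mem_union] at huW
    rcases huW with huS | huI
    · have h3 : u = v := hpn2 v hvA u huS (by rw [hpv]; exact Or.inr hadj)
      subst h3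
      exact G.irrefl hadj
    · obtain ⟨v', hv'A, rfl⟩ := mem_image.mp huI
      have hvv' : v = v' := hpn2 v' hv'A v (hAS hvA) (Or.inr hadj.symm)
      subst hvv'
      rw [hpv] at hadj
      exact G.irrefl hadj
  have hpnA1 : ∀ v ∈ A1, pn v ∉ S := by
    intro v hv hmem
    rw [hA1, mem_filter] at hv
    exact hv.2 (hpn2 v hv.1 (pn v) hmem (Or.inl rfl))
  have hA1W : A1.image pn ⊆ W \ S := by
    intro u hu
    obtain ⟨v, hv, rfl⟩ := mem_image.mp hu
    exact mem_sdiff.mpr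
      ⟨mem_union_right _ (mem_image_of_mem pn ((filter_subset _ _) hv)), hpnA1 v hv⟩
  have hA1card : A1.card = (A1.image pn).card := by
    refine (card_image_of_injOn ?_).symm
    intro v hv v' hv' h
    exact hinj v ((filter_subset _ _) hv) v' ((filter_subset _ _) hv') h
  have hWS : S ⊆ W := subset_union_left
  have hWsplit : (W \ S).card + S.card = W.card := card_sdiff_add_card_eq_card hWS
  have hA1le : (A1.image pn).card ≤ (W \ S).card := card_le_card hA1W
  -- coloring
  have hcol : ∀ u v : V, G.Adj u v → G.dist r u % 2 ≠ G.dist r v % 2 := by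
    intro u v h hne
    rcases tree_adj_dist hT r h with h1 | h1 <;> omega
  set X := W \ Iso with hX
  have hsplit : (X.filter (fun v => G.dist r v % 2 = 0)).card +
      (X.filter (fun v => ¬ G.dist r v % 2 = 0)).card = X.card :=
    card_filter_add_card_filter_not ..
  obtain ⟨B, hBX, hBcard, hBcol⟩ :
      ∃ B : Finset V, B ⊆ X ∧ X.card ≤ 2 * B.card ∧
        ∀ u ∈ B, ∀ v ∈ B, G.dist r u % 2 = G.dist r v % 2 := by
    rcases le_total (X.filter (fun v => G.dist r v % 2 = 0)).card
        (X.filter (fun v => ¬ G.dist r v % 2 = 0)).card with hle | hle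
    · refine ⟨_, filter_subset (fun v => ¬ G.dist r v % 2 = 0) X, by omega, ?_⟩
      intro u hu v hv
      rw [mem_filter] at hu hv
      omega
    · refine ⟨_, filter_subset (fun v => G.dist r v % 2 = 0) X, by omega, ?_⟩
      intro u hu v hv
      rw [mem_filter] at hu hv
      omega
  have hIsoW : Iso ⊆ W := filter_subset _ _
  have hXW : X ⊆ W := sdiff_subset
  have hIso_no : ∀ v ∈ Iso, ∀ u ∈ W, ¬ G.Adj u v := by
    intro v hv
    rw [hIso, mem_filter] at hv
    exact hv.2
  have hInd : ∀ u ∈ B ∪ Iso, ∀ v ∈ B ∪ Iso, ¬ G.Adj u v := by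
    intro u hu v hv hadj
    rw [mem_union] at hu hv
    rcases hv with hvB | hvIso
    · rcases hu with huB | huIso
      · exact hcol u v hadj (hBcol u huB v hvB)
      · exact hIso_no u huIso v (hXW (hBX hvB)) hadj.symm
    · refine hIso_no v hvIso u ?_ hadj
      rcases hu with h | h
      · exact hXW (hBX h)
      · exact hIsoW h
  have hdisj : Disjoint B Iso := by
    refine disjoint_left.mpr ?_
    intro a haB haIso
    exact (mem_sdiff.mp (hBX haB)).2 haIso
  have hIcard : (B ∪ Iso).card = B.card + Iso.card := card_union_of_disjoint hdisj
  obtain ⟨J, hIJ, hJmin⟩ := exists_minimalDomSet_superset G (B ∪ Iso) hInd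
  have hJG : J.card ≤ bigGamma G := le_bigGamma hJmin
  have hIJcard : (B ∪ Iso).card ≤ J.card := card_le_card hIJ
  have hXcard : X.card + Iso.card = W.card := card_sdiff_add_card_eq_card hIsoW
  have hA0le : A0.card ≤ Iso.card := card_le_card hA0Iso
  have hA01 : A0.card + A1.card = A.card := card_filter_add_card_filter_not ..
  omega
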